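/- For n ≥ 3, the maximum number Sp(W,n) of pairwise unrelated copies of the 4-element poset W (one bottom element below three pairwise incomparable maximal elements) in the powerset lattice of [n] is at most ⌊ n/(3n−2−2⌊n/2⌋) · C(n−1, ⌊(n−1)/2⌋) ⌋. -/

import Mathlib

/-- The 4-element poset `W`: a bottom element (`none`) below three pairwise
incomparable maximal elements (`some 0`, `some 1`, `some 2`). -/
def WPoset : Type := Option (Fin 3)

instance : PartialOrder WPoset where
  le x y := x = none ∨ x = y
  le_refl x := Or.inr rfl
  le_trans x y z h₁ h₂ := by
    rcases h₁ with h | h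
    · exact Or.inl h
    · subst h; exact h₂
  le_antisymm x y h₁ h₂ := by
    rcases h₁ with h | h
    · rcases h₂ with g | g
      · exact h.trans g.symm
      · exact g.symm
    · exact h


private lemma fact_split (a d : ℕ) :
    (a + d).factorial = (a+d).choose a * (a.factorial * d.factorial) := by
  have h := Nat.choose_mul_factorial_mul_factorial (Nat.le_add_right a d)
  rw [Nat.add_sub_cancel_left] at h
  rw [← h]; ring

private lemma choose_ge_add (p : ℕ) (hp : 1 ≤ p) : ∀ q, 1 ≤ q → p + q ≤ (p+q).choose p := by
  intro q
  induction q with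
  | zero => omega
  | succ q ih =>
    intro _
    rcases Nat.eq_zero_or_pos q with h0 | h1
    · subst h0; simp [Nat.choose_succ_self_right]
    · obtain ⟨r, rfl⟩ : ∃ r, p = r + 1 := ⟨p - 1, by omega⟩
      have hps : r + 1 + (q+1) = (r + 1 + q) + 1 := by ring
      rw [hps, Nat.choose_succ_succ]
      have h2 := ih h1
      have h3 : 1 ≤ (r + 1 + q).choose r := Nat.choose_pos (by omega)
      simp only [Nat.succ_eq_add_one] at *
      omega

-- coefficient helper
private lemma coeffS1 (a d c K Y : ℕ) (hK : 1 ≤ K) (h : c ≤ a + d) :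
    (c+1)*(K*Y) + (d+1)*Y ≤ (a+d+1)*(K*Y) + (c+1)*Y := by
  have h1 : (a+d+1)*(K*Y) = (c+1)*(K*Y) + ((a+d-c)*K)*Y := by
    have e : a+d+1 = (c+1) + (a+d-c) := by omega
    rw [e]; ring
  have h2 : a+d-c ≤ (a+d-c)*K := Nat.le_mul_of_pos_right _ hK
  calc (c+1)*(K*Y) + (d+1)*Y ≤ (c+1)*(K*Y) + ((a+d-c) + (c+1))*Y := by
        refine Nat.add_le_add_left (Nat.mul_le_mul_right _ (by omega)) _
    _ ≤ (c+1)*(K*Y) + ((a+d-c)*K + (c+1))*Y := by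
        refine Nat.add_le_add_left (Nat.mul_le_mul_right _ (by omega)) _
    _ = (a+d+1)*(K*Y) + (c+1)*Y := by rw [h1]; ring

private lemma S1' (a d c : ℕ) (h : c ≤ a + d) :
    (a+d).factorial * (c+1).factorial + a.factorial * (d+1).factorial * c.factorial
      ≤ (a+d+1).factorial * c.factorial + a.factorial * d.factorial * (c+1).factorial := by
  have hs := fact_split a d
  have hK : 1 ≤ (a+d).choose a := Nat.choose_pos (by omega)
  have := coeffS1 a d c ((a+d).choose a) (a.factorial * d.factorial * c.factorial) hK h
  calc (a+d).factorial * (c+1).factorial + a.factorial * (d+1).factorial * c.factorial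
      = (c+1)*((a+d).choose a * (a.factorial * d.factorial * c.factorial))
        + (d+1)*(a.factorial * d.factorial * c.factorial) := by
        rw [hs, Nat.factorial_succ (c), Nat.factorial_succ (d)]; ring
    _ ≤ (a+d+1)*((a+d).choose a * (a.factorial * d.factorial * c.factorial))
        + (c+1)*(a.factorial * d.factorial * c.factorial) := this
    _ = (a+d+1).factorial * c.factorial + a.factorial * d.factorial * (c+1).factorial := by
        rw [show (a+d+1).factorial = (a+d+1) * (a+d).factorial from rfl, hs,
          Nat.factorial_succ (c)]; ring

private lemma coeffS2 (a d c K Y : ℕ) (hK : a + 1 ≤ K) (h : a + d + 1 ≤ c) :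
    (a+d+1)*(K*Y) + (c+1)*Y ≤ (c+1)*(K*Y) + (d+1)*Y := by
  have h1 : (c+1)*(K*Y) = (a+d+1)*(K*Y) + ((c-a-d)*K)*Y := by
    have e : c+1 = (a+d+1) + (c-a-d) := by omega
    rw [e]; ring
  have h2 : (c-a-d)*(a+1) ≤ (c-a-d)*K := Nat.mul_le_mul_left _ hK
  have h3 : (c-a-d) + a ≤ (c-a-d)*(a+1) := by
    have : (c-a-d)*(a+1) = (c-a-d) + (c-a-d)*a := by ring
    have ha : a ≤ (c-a-d)*a := Nat.le_mul_of_pos_left _ (by omega)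
    omega
  calc (a+d+1)*(K*Y) + (c+1)*Y
      = (a+d+1)*(K*Y) + (((c-a-d) + a) + (d+1))*Y := by congr 2; omega
    _ ≤ (a+d+1)*(K*Y) + ((c-a-d)*K + (d+1))*Y := by
        refine Nat.add_le_add_left (Nat.mul_le_mul_right _ (by omega)) _
    _ = (c+1)*(K*Y) + (d+1)*Y := by rw [h1]; ring

private lemma choose_ge_succ (a d : ℕ) (hd : 1 ≤ d) : a + 1 ≤ (a+d).choose a := by
  calc a + 1 = (a+1).choose a := (Nat.choose_succ_self_right a).symm
    _ ≤ (a+d).choose a := Nat.choose_le_choose a (by omega)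

private lemma S2' (a d c : ℕ) (hd : 1 ≤ d) (h : a + d + 1 ≤ c) :
    (a+d+1).factorial * c.factorial + a.factorial * d.factorial * (c+1).factorial
      ≤ (a+d).factorial * (c+1).factorial + a.factorial * (d+1).factorial * c.factorial := by
  have hs := fact_split a d
  have hK := choose_ge_succ a d hd
  have := coeffS2 a d c ((a+d).choose a) (a.factorial * d.factorial * c.factorial) hK h
  calc (a+d+1).factorial * c.factorial + a.factorial * d.factorial * (c+1).factorial
      = (a+d+1)*((a+d).choose a * (a.factorial * d.factorial * c.factorial))
        + (c+1)*(a.factorial * d.factorial * c.factorial) := by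
        rw [show (a+d+1).factorial = (a+d+1) * (a+d).factorial from rfl, hs,
          Nat.factorial_succ (c)]; ring
    _ ≤ (c+1)*((a+d).choose a * (a.factorial * d.factorial * c.factorial))
        + (d+1)*(a.factorial * d.factorial * c.factorial) := this
    _ = (a+d).factorial * (c+1).factorial + a.factorial * (d+1).factorial * c.factorial := by
        rw [hs, Nat.factorial_succ (c), Nat.factorial_succ (d)]; ring

-- Claim C step: a!*(p+q+1)! + 3*(a+1)!*p!*q!  ≥  (a+1)!*(p+q)! + 3*a!*(p+1)!*q!
private lemma coeffC (a p q K Y : ℕ) (hK : 1 ≤ K) (hK3 : a + 1 ≤ p → 3 ≤ K)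
    (h : a + p + 1 ≤ q) :
    (a+1)*(K*Y) + 3*((p+1)*Y) ≤ (p+q+1)*(K*Y) + 3*((a+1)*Y) := by
  rcases le_or_gt p a with hpa | hap
  · -- trivial case: p ≤ a
    refine Nat.add_le_add ?_ ?_
    · exact Nat.mul_le_mul (by omega) le_rfl
    · exact Nat.mul_le_mul le_rfl (Nat.mul_le_mul (by omega) le_rfl)
  · have hK3' : 3 ≤ K := hK3 hap
    have h1 : (p+q+1)*(K*Y) = (a+1)*(K*Y) + ((p+q-a)*K)*Y := by
      have e : p+q+1 = (a+1) + (p+q-a) := by omega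
      rw [e]; ring
    have h2 : (p+q-a)*3 ≤ (p+q-a)*K := Nat.mul_le_mul_left _ hK3'
    calc (a+1)*(K*Y) + 3*((p+1)*Y)
        ≤ (a+1)*(K*Y) + ((p+q-a)*K)*Y := by
          refine Nat.add_le_add_left ?_ _
          calc 3*((p+1)*Y) = (3*(p+1))*Y := by ring
            _ ≤ ((p+q-a)*3)*Y := Nat.mul_le_mul_right _ (by omega)
            _ ≤ ((p+q-a)*K)*Y := Nat.mul_le_mul_right _ h2
      _ ≤ (a+1)*(K*Y) + ((p+q-a)*K)*Y + 3*((a+1)*Y) := Nat.le_add_right _ _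
      _ = (p+q+1)*(K*Y) + 3*((a+1)*Y) := by rw [h1]

private lemma ClaimC' (a p q : ℕ) (h : a + p + 1 ≤ q) :
    (a+1).factorial * (p+q).factorial + 3*(a.factorial * (p+1).factorial * q.factorial)
      ≤ a.factorial * (p+q+1).factorial + 3*((a+1).factorial * p.factorial * q.factorial) := by
  have hs := fact_split p q
  have hK : 1 ≤ (p+q).choose p := Nat.choose_pos (by omega)
  have hK3 : a + 1 ≤ p → 3 ≤ (p+q).choose p := by
    intro hap
    have := choose_ge_add p (by omega) q (by omega)
    omega
  have := coeffC a p q ((p+q).choose p) (a.factorial * (p.factorial * q.factorial)) hK hK3 h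
  calc (a+1).factorial * (p+q).factorial + 3*(a.factorial * (p+1).factorial * q.factorial)
      = (a+1)*((p+q).choose p * (a.factorial * (p.factorial * q.factorial)))
        + 3*((p+1)*(a.factorial * (p.factorial * q.factorial))) := by
        rw [Nat.factorial_succ a, hs, Nat.factorial_succ p]; ring
    _ ≤ (p+q+1)*((p+q).choose p * (a.factorial * (p.factorial * q.factorial)))
        + 3*((a+1)*(a.factorial * (p.factorial * q.factorial))) := this
    _ = a.factorial * (p+q+1).factorial + 3*((a+1).factorial * p.factorial * q.factorial) := by
        rw [show (p+q+1).factorial = (p+q+1) * (p+q).factorial from rfl, hs,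
          Nat.factorial_succ a]; ring

private lemma S3baseOdd (t : ℕ) :
    (4*t+5) * (2*t+2).choose t ≤ (4*t+3) * (2*t+2).choose (t+1) := by
  have hid := Nat.choose_succ_right_eq (2*t+2) t
  have e : 2*t+2-t = t+2 := by omega
  rw [e] at hid
  refine Nat.le_of_mul_le_mul_right ?_ (show 0 < t+1 by omega)
  calc (4*t+5) * (2*t+2).choose t * (t+1)
      = (2*t+2).choose t * ((4*t+5)*(t+1)) := by ring
    _ ≤ (2*t+2).choose t * ((4*t+3)*(t+2)) := Nat.mul_le_mul_left _ (by nlinarith)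
    _ = (4*t+3) * ((2*t+2).choose (t+1) * (t+1)) := by rw [hid]; ring
    _ = (4*t+3) * (2*t+2).choose (t+1) * (t+1) := by ring

private lemma S3a (n : ℕ) (h3 : 3 ≤ n) (a : ℕ) (ha : (n-1)/2 ≤ a) :
    (3*n-2-2*(n/2)) * (n-1).choose a ≤ (n+2*a) * (n-1).choose ((n-1)/2) := by
  induction a, ha using Nat.le_induction with
  | base => exact Nat.mul_le_mul_right _ (by omega)
  | succ a ha ih =>
    have hdec : (n-1).choose (a+1) ≤ (n-1).choose a := by
      have h := Nat.choose_succ_right_eq (n-1) a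
      have h2 : (n-1).choose a * (n-1-a) ≤ (n-1).choose a * (a+1) :=
        Nat.mul_le_mul_left _ (by omega)
      rw [← h] at h2
      exact Nat.le_of_mul_le_mul_right h2 (by omega)
    calc (3*n-2-2*(n/2)) * (n-1).choose (a+1)
        ≤ (3*n-2-2*(n/2)) * (n-1).choose a := Nat.mul_le_mul_left _ hdec
      _ ≤ (n+2*a) * (n-1).choose ((n-1)/2) := ih
      _ ≤ (n+2*(a+1)) * (n-1).choose ((n-1)/2) := Nat.mul_le_mul_right _ (by omega)

private lemma S3base (n : ℕ) (h3 : 3 ≤ n) :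
    (3*n-2-2*(n/2)) * (n-1).choose (n/2-1) ≤ (n+2*(n/2)-2) * (n-1).choose ((n-1)/2) := by
  rcases Nat.even_or_odd n with he | ho
  · obtain ⟨m, rfl⟩ := he
    have e1 : (m+m)/2 - 1 = (m+m-1)/2 := by omega
    rw [e1]
    exact Nat.mul_le_mul_right _ (by omega)
  · obtain ⟨m, hm⟩ := ho
    obtain ⟨t, rfl⟩ : ∃ t, m = t+1 := ⟨m-1, by omega⟩
    subst hm
    simp only [show (2*(t+1)+1)/2 = t+1 from by omega,
      show 2*(t+1)+1-1 = 2*t+2 from by omega,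
      show (2*t+2)/2 = t+1 from by omega,
      show t+1-1 = t from by omega,
      show 3*(2*(t+1)+1)-2-2*(t+1) = 4*t+5 from by omega,
      show 2*(t+1)+1+2*(t+1)-2 = 4*t+3 from by omega]
    exact S3baseOdd t

private lemma red1 (n a : ℕ) (han : a + 1 ≤ n)
    (hbase : (3*n-2-2*(n/2)) * (n-1).choose a ≤ (n+2*a) * (n-1).choose ((n-1)/2)) :
    (3*n-2-2*(n/2)) * n.factorial
      + 3*(a.factorial * (n-(a+1)).factorial) * (n * (n-1).choose ((n-1)/2))
    ≤ (a.factorial * (n-a).factorial + 3*((a+1).factorial * (n-(a+1)).factorial))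
        * (n * (n-1).choose ((n-1)/2)) := by
  obtain ⟨e, rfl⟩ : ∃ e, n = a+1+e := ⟨n-(a+1), by omega⟩
  rw [show a+1+e-(a+1) = e from by omega, show a+1+e-a = e+1 from by omega,
    show a+1+e-1 = a+e from by omega] at *
  rw [show a+1+e+2*a = 3*a+e+1 from by omega] at hbase
  have h1 : (a+1+e).factorial = (a+1+e) * ((a+e).choose a * (a.factorial*e.factorial)) := by
    rw [← fact_split, show a+1+e = (a+e)+1 from by omega, Nat.factorial_succ]
  have hkey : (3*(a+1+e)-2-2*((a+1+e)/2)) * (a+1+e).factorial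
      ≤ (3*a+e+1) * (a.factorial*e.factorial) * ((a+1+e) * (a+e).choose ((a+e)/2)) := by
    calc (3*(a+1+e)-2-2*((a+1+e)/2)) * (a+1+e).factorial
        = ((3*(a+1+e)-2-2*((a+1+e)/2)) * (a+e).choose a)
            * ((a.factorial*e.factorial) * (a+1+e)) := by rw [h1]; ring
      _ ≤ ((3*a+e+1) * (a+e).choose ((a+e)/2))
            * ((a.factorial*e.factorial) * (a+1+e)) := Nat.mul_le_mul_right _ hbase
      _ = (3*a+e+1) * (a.factorial*e.factorial) * ((a+1+e) * (a+e).choose ((a+e)/2)) := by ring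
  calc (3*(a+1+e)-2-2*((a+1+e)/2)) * (a+1+e).factorial
        + 3*(a.factorial * e.factorial) * ((a+1+e) * (a+e).choose ((a+e)/2))
      ≤ (3*a+e+1) * (a.factorial*e.factorial) * ((a+1+e) * (a+e).choose ((a+e)/2))
        + 3*(a.factorial * e.factorial) * ((a+1+e) * (a+e).choose ((a+e)/2)) :=
        Nat.add_le_add_right hkey _
    _ = (a.factorial*(e+1).factorial + 3*((a+1).factorial * e.factorial))
          * ((a+1+e) * (a+e).choose ((a+e)/2)) := by
        rw [Nat.factorial_succ e, Nat.factorial_succ a]; ring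

private lemma G2 (n : ℕ) (h3 : 3 ≤ n) : ∀ k a, a + k + 1 = n/2 →
    (3*n-2-2*(n/2)) * n.factorial
      + 3*(a.factorial * (n/2 - a).factorial * (n - n/2).factorial)
          * (n * (n-1).choose ((n-1)/2))
    ≤ (a.factorial * (n-a).factorial + 3*((n/2).factorial * (n - n/2).factorial))
        * (n * (n-1).choose ((n-1)/2)) := by
  intro k
  induction k with
  | zero =>
    intro a ha
    rw [show n/2 - a = 1 from by omega, Nat.factorial_one, mul_one,
      show n - n/2 = n - (a+1) from by omega,
      show (n/2).factorial = (a+1).factorial from by rw [show n/2 = a+1 from by omega]]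
    refine red1 n a (by omega) ?_
    have hb := S3base n h3
    rw [show n/2-1 = a from by omega, show n+2*(n/2)-2 = n+2*a from by omega] at hb
    exact hb
  | succ k ih =>
    intro a ha
    have hIH := ih (a+1) (by omega)
    have hC := ClaimC' a (n/2 - (a+1)) (n - n/2) (by omega)
    rw [show n/2-(a+1)+(n-n/2) = n-(a+1) from by omega,
      show n/2-(a+1)+1 = n/2-a from by omega,
      show n-(a+1)+1 = n-a from by omega] at hC
    -- hC : (a+1)! * (n-(a+1))! + 3*(a! * (n/2-a)! * (n-n/2)!)
    --        ≤ a! * (n-a)! + 3*((a+1)! * (n/2-(a+1))! * (n-n/2)!)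
    have hC2 : ((a+1).factorial * (n-(a+1)).factorial
          + 3*(a.factorial * (n/2-a).factorial * (n-n/2).factorial))
            * (n * (n-1).choose ((n-1)/2))
        ≤ (a.factorial * (n-a).factorial
          + 3*((a+1).factorial * (n/2-(a+1)).factorial * (n-n/2).factorial))
            * (n * (n-1).choose ((n-1)/2)) := Nat.mul_le_mul_right _ hC
    ring_nf at hIH hC2 ⊢
    linarith [hIH, hC2]

-- moving b upward: for b0 ≥ max (a+1) (n/2), φ(a,b) ≥ φ(a,b0) for b ≥ b0
private lemma moveUp (n a b0 : ℕ) (hab : a < b0) (hm : n/2 ≤ b0) :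
    ∀ b, b0 ≤ b → b ≤ n →
    b0.factorial * (n-b0).factorial + a.factorial * (b-a).factorial * (n-b).factorial
    ≤ b.factorial * (n-b).factorial + a.factorial * (b0-a).factorial * (n-b0).factorial := by
  intro b hb
  induction b, hb using Nat.le_induction with
  | base => intro _; exact le_of_eq (by ring)
  | succ b hb ihb =>
    intro hbn
    have hprev := ihb (by omega)
    have hS := S1' a (b-a) (n-(b+1)) (by omega)
    rw [show a+(b-a) = b from by omega, show n-(b+1)+1 = n-b from by omega,
      show b-a+1 = b+1-a from by omega] at hS
    -- hS : b!*(n-b)! + a!*(b+1-a)!*(n-(b+1))! ≤ (b+1)!*(n-(b+1))! + a!*(b-a)!*(n-b)!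
    linarith [hprev, hS]

-- moving b downward to n/2
private lemma moveDown (n a : ℕ) :
    ∀ k b, a < b → b + k = n/2 →
    (n/2).factorial * (n-n/2).factorial + a.factorial * (b-a).factorial * (n-b).factorial
    ≤ b.factorial * (n-b).factorial + a.factorial * (n/2-a).factorial * (n-n/2).factorial := by
  intro k
  induction k with
  | zero =>
    intro b hab hb
    rw [show n/2 = b from by omega]
  | succ k ih =>
    intro b hab hb
    have hIH := ih (b+1) (by omega) (by omega)
    have hS := S2' a (b-a) (n-(b+1)) (by omega) (by omega)
    rw [show a+(b-a) = b from by omega, show n-(b+1)+1 = n-b from by omega,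
      show b-a+1 = b+1-a from by omega] at hS
    -- hS : (b+1)!*(n-(b+1))! + a!*(b-a)!*(n-b)! ≤ b!*(n-b)! + a!*(b+1-a)!*(n-(b+1))!
    linarith [hIH, hS]

private lemma core (n a b : ℕ) (h3 : 3 ≤ n) (hab : a < b) (hbn : b ≤ n) :
    (3*n-2-2*(n/2)) * n.factorial
      + 3*(a.factorial * (b-a).factorial * (n-b).factorial) * (n * (n-1).choose ((n-1)/2))
    ≤ (a.factorial * (n-a).factorial + 3*(b.factorial * (n-b).factorial))
        * (n * (n-1).choose ((n-1)/2)) := by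
  rcases le_or_gt ((n-1)/2) a with hA | hB
  · -- case a ≥ (n-1)/2 : compare with b0 = a+1
    have hmove := moveUp n a (a+1) (by omega) (by omega) b (by omega) hbn
    rw [show a+1-a = 1 from by omega, Nat.factorial_one] at hmove
    -- hmove : (a+1)!*(n-(a+1))! + a!*(b-a)!*(n-b)! ≤ b!*(n-b)! + a!*1*(n-(a+1))!
    have h1 := red1 n a (by omega) (S3a n h3 a hA)
    have hm2 : ((a+1).factorial * (n-(a+1)).factorial
          + a.factorial * (b-a).factorial * (n-b).factorial) * (3 * (n * (n-1).choose ((n-1)/2)))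
        ≤ (b.factorial * (n-b).factorial
          + a.factorial * 1 * (n-(a+1)).factorial) * (3 * (n * (n-1).choose ((n-1)/2))) :=
      Nat.mul_le_mul_right _ hmove
    ring_nf at h1 hm2 ⊢
    linarith [h1, hm2]
  · -- case a < (n-1)/2 : compare with b0 = n/2
    have hmove : (n/2).factorial * (n-n/2).factorial
          + a.factorial * (b-a).factorial * (n-b).factorial
        ≤ b.factorial * (n-b).factorial
          + a.factorial * (n/2-a).factorial * (n-n/2).factorial := by
      rcases le_or_gt (n/2) b with h | h
      · exact moveUp n a (n/2) (by omega) le_rfl b h hbn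
      · exact moveDown n a (n/2 - b) b hab (by omega)
    have hG := G2 n h3 (n/2 - 1 - a) a (by omega)
    have hm2 : ((n/2).factorial * (n-n/2).factorial
          + a.factorial * (b-a).factorial * (n-b).factorial) * (3 * (n * (n-1).choose ((n-1)/2)))
        ≤ (b.factorial * (n-b).factorial
          + a.factorial * (n/2-a).factorial * (n-n/2).factorial) * (3 * (n * (n-1).choose ((n-1)/2))) :=
      Nat.mul_le_mul_right _ hmove
    ring_nf at hG hm2 ⊢
    linarith [hG, hm2]


variable {n : ℕ}

private def Iv (n t : ℕ) : Finset (Fin n) := Finset.univ.filter (fun x => (x:ℕ) < t)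

private lemma mem_Iv {t : ℕ} {x : Fin n} : x ∈ Iv n t ↔ (x:ℕ) < t := by simp [Iv]

private lemma card_Iv (t : ℕ) (h : t ≤ n) : (Iv n t).card = t := by
  have e : Iv n t = (Finset.range t).attachFin
      (fun m hm => lt_of_lt_of_le (Finset.mem_range.mp hm) h) := by
    ext x; simp [Iv, Finset.mem_attachFin]
  rw [e, Finset.card_attachFin, Finset.card_range]

private lemma Iv_mono {s t : ℕ} (h : s ≤ t) : Iv n s ⊆ Iv n t :=
  fun x hx => mem_Iv.mpr (lt_of_lt_of_le (mem_Iv.mp hx) h)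

private def Pass (A : Finset (Fin n)) : Finset (Equiv.Perm (Fin n)) :=
  Finset.univ.filter (fun σ => (Iv n A.card).image σ = A)

private lemma mem_Pass {A : Finset (Fin n)} {σ : Equiv.Perm (Fin n)} :
    σ ∈ Pass A ↔ (Iv n A.card).image σ = A := by simp [Pass]

private lemma pass_subset {A B : Finset (Fin n)} {σ : Equiv.Perm (Fin n)}
    (hA : σ ∈ Pass A) (hB : σ ∈ Pass B) (h : A.card ≤ B.card) : A ⊆ B := by
  rw [mem_Pass] at hA hB
  rw [← hA, ← hB]
  exact Finset.image_subset_image (Iv_mono h)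

-- gluing two partial equivs into a permutation
private def glue (p q : Fin n → Prop) [DecidablePred p] [DecidablePred q]
    (e₁ : {x // p x} ≃ {x // q x}) (e₂ : {x // ¬p x} ≃ {x // ¬q x}) : Equiv.Perm (Fin n) :=
  (Equiv.sumCompl p).symm.trans ((e₁.sumCongr e₂).trans (Equiv.sumCompl q))

private lemma glue_pos (p q : Fin n → Prop) [DecidablePred p] [DecidablePred q]
    (e₁ : {x // p x} ≃ {x // q x}) (e₂ : {x // ¬p x} ≃ {x // ¬q x}) (x : Fin n) (hx : p x) :
    glue p q e₁ e₂ x = (e₁ ⟨x, hx⟩ : Fin n) := by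
  simp [glue, Equiv.sumCompl_symm_apply_of_pos hx]

private lemma glue_neg (p q : Fin n → Prop) [DecidablePred p] [DecidablePred q]
    (e₁ : {x // p x} ≃ {x // q x}) (e₂ : {x // ¬p x} ≃ {x // ¬q x}) (x : Fin n) (hx : ¬ p x) :
    glue p q e₁ e₂ x = (e₂ ⟨x, hx⟩ : Fin n) := by
  simp [glue, Equiv.sumCompl_symm_apply_of_neg hx]

private lemma card_pass_ge (A : Finset (Fin n)) :
    (A.card).factorial * (n - A.card).factorial ≤ (Pass A).card := by
  classical
  set a := A.card with hadef
  have ha : a ≤ n := by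
    simpa using Finset.card_le_card (Finset.subset_univ A)
  have c1 : Fintype.card {x : Fin n // x ∈ Iv n a} = a := by
    rw [Fintype.card_coe, card_Iv a ha]
  have c2 : Fintype.card {x : Fin n // x ∈ A} = a := Fintype.card_coe A
  have c3 : Fintype.card {x : Fin n // ¬ x ∈ Iv n a} = n - a := by
    rw [Fintype.card_subtype_compl, c1, Fintype.card_fin]
  have c4 : Fintype.card {x : Fin n // ¬ x ∈ A} = n - a := by
    rw [Fintype.card_subtype_compl, c2, Fintype.card_fin]
  have cardT : Fintype.card (({x : Fin n // x ∈ Iv n a} ≃ {x : Fin n // x ∈ A})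
      × ({x : Fin n // ¬ x ∈ Iv n a} ≃ {x : Fin n // ¬ x ∈ A})) = a.factorial * (n-a).factorial := by
    rw [Fintype.card_prod,
      Fintype.card_equiv (Fintype.equivOfCardEq (c1.trans c2.symm)),
      Fintype.card_equiv (Fintype.equivOfCardEq (c3.trans c4.symm)), c1, c3]
  have hmem : ∀ t : (({x : Fin n // x ∈ Iv n a} ≃ {x : Fin n // x ∈ A})
      × ({x : Fin n // ¬ x ∈ Iv n a} ≃ {x : Fin n // ¬ x ∈ A})), glue _ _ t.1 t.2 ∈ Pass A := by
    rintro ⟨e₁, e₂⟩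
    rw [mem_Pass]
    ext y
    constructor
    · intro hy
      obtain ⟨x, hx, rfl⟩ := Finset.mem_image.mp hy
      rw [glue_pos _ _ e₁ e₂ x hx]
      exact (e₁ ⟨x, hx⟩).2
    · intro hy
      refine Finset.mem_image.mpr ⟨(e₁.symm ⟨y, hy⟩ : Fin n), (e₁.symm ⟨y, hy⟩).2, ?_⟩
      rw [glue_pos _ _ e₁ e₂ _ (e₁.symm ⟨y, hy⟩).2]
      simp
  have hinj : Function.Injective (fun t : (({x : Fin n // x ∈ Iv n a} ≃ {x : Fin n // x ∈ A})
      × ({x : Fin n // ¬ x ∈ Iv n a} ≃ {x : Fin n // ¬ x ∈ A})) => (⟨glue _ _ t.1 t.2, hmem t⟩ : {σ // σ ∈ Pass A})) := by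
    rintro ⟨e₁, e₂⟩ ⟨f₁, f₂⟩ h
    simp only [Subtype.mk.injEq] at h
    have h1 : e₁ = f₁ := by
      refine Equiv.ext (fun x => Subtype.ext ?_)
      have := congrArg (fun σ : Equiv.Perm (Fin n) => σ (x : Fin n)) h
      rw [glue_pos _ _ e₁ e₂ _ x.2, glue_pos _ _ f₁ f₂ _ x.2] at this
      simpa using this
    have h2 : e₂ = f₂ := by
      refine Equiv.ext (fun x => Subtype.ext ?_)
      have := congrArg (fun σ : Equiv.Perm (Fin n) => σ (x : Fin n)) h
      rw [glue_neg _ _ e₁ e₂ _ x.2, glue_neg _ _ f₁ f₂ _ x.2] at this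
      simpa using this
    simp [h1, h2]
  calc a.factorial * (n-a).factorial = _ := cardT.symm
    _ ≤ Fintype.card {σ // σ ∈ Pass A} := Fintype.card_le_of_injective _ hinj
    _ = (Pass A).card := Fintype.card_coe _

private def resEquiv (σ : Equiv.Perm (Fin n)) (S T : Finset (Fin n))
    (h : S.image σ = T) : {x : Fin n // x ∈ S} ≃ {x : Fin n // x ∈ T} where
  toFun x := ⟨σ x, by rw [← h]; exact Finset.mem_image_of_mem σ x.2⟩
  invFun y := ⟨σ.symm y, by
    have hy : (y : Fin n) ∈ S.image σ := by rw [h]; exact y.2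
    obtain ⟨x, hx, hxy⟩ := Finset.mem_image.mp hy
    rw [← hxy, Equiv.symm_apply_apply]; exact hx⟩
  left_inv x := by simp
  right_inv y := by simp

private lemma resEquiv_apply (σ : Equiv.Perm (Fin n)) (S T : Finset (Fin n))
    (h : S.image σ = T) (x : {x : Fin n // x ∈ S}) :
    (resEquiv σ S T h x : Fin n) = σ x := rfl

private def resEquivCompl (σ : Equiv.Perm (Fin n)) (S T : Finset (Fin n))
    (h : S.image σ = T) : {x : Fin n // ¬ x ∈ S} ≃ {x : Fin n // ¬ x ∈ T} where
  toFun x := ⟨σ x, by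
    intro hc
    have hc' : σ (x : Fin n) ∈ S.image σ := by rw [h]; exact hc
    obtain ⟨z, hz, hzx⟩ := Finset.mem_image.mp hc'
    exact x.2 (by rwa [← σ.injective hzx])⟩
  invFun y := ⟨σ.symm y, by
    intro hc
    exact y.2 (by
      have : σ (σ.symm y) ∈ S.image σ := Finset.mem_image_of_mem σ hc
      rwa [Equiv.apply_symm_apply, h] at this)⟩
  left_inv x := by simp
  right_inv y := by simp

private lemma resEquivCompl_apply (σ : Equiv.Perm (Fin n)) (S T : Finset (Fin n))
    (h : S.image σ = T) (x : {x : Fin n // ¬ x ∈ S}) :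
    (resEquivCompl σ S T h x : Fin n) = σ x := rfl

private lemma card_pass_inter_le (A B : Finset (Fin n)) (hAB : A ⊆ B) :
    (Pass A ∩ Pass B).card
      ≤ (A.card).factorial * (B.card - A.card).factorial * (n - B.card).factorial := by
  classical
  set a := A.card with hadef
  set b := B.card with hbdef
  have hab : a ≤ b := Finset.card_le_card hAB
  have hbn : b ≤ n := by simpa using Finset.card_le_card (Finset.subset_univ B)
  have hIvab : Iv n a ⊆ Iv n b := Iv_mono hab
  -- three component images
  have himg : ∀ σ : Equiv.Perm (Fin n), σ ∈ Pass A ∩ Pass B →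
      (Iv n a).image σ = A ∧ ((Iv n b) \ (Iv n a)).image σ = B \ A ∧ (Iv n b).image σ = B := by
    intro σ hσ
    obtain ⟨h1, h2⟩ := Finset.mem_inter.mp hσ
    rw [mem_Pass] at h1 h2
    refine ⟨h1, ?_, h2⟩
    rw [Finset.image_sdiff _ _ σ.injective, h1, h2]
  -- the injection
  have c1 : Fintype.card {x : Fin n // x ∈ Iv n a} = a := by rw [Fintype.card_coe, card_Iv a (hab.trans hbn)]
  have c2 : Fintype.card {x : Fin n // x ∈ A} = a := Fintype.card_coe A
  have c3 : Fintype.card {x : Fin n // x ∈ (Iv n b) \ (Iv n a)} = b - a := by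
    rw [Fintype.card_coe, Finset.card_sdiff_of_subset hIvab, card_Iv a (hab.trans hbn), card_Iv b hbn]
  have c4 : Fintype.card {x : Fin n // x ∈ B \ A} = b - a := by
    rw [Fintype.card_coe, Finset.card_sdiff_of_subset hAB]
  have c5 : Fintype.card {x : Fin n // ¬ x ∈ Iv n b} = n - b := by
    rw [Fintype.card_subtype_compl, Fintype.card_fin, Fintype.card_coe, card_Iv b hbn]
  have c6 : Fintype.card {x : Fin n // ¬ x ∈ B} = n - b := by
    rw [Fintype.card_subtype_compl, Fintype.card_fin, Fintype.card_coe]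
  have cardT : Fintype.card (({x : Fin n // x ∈ Iv n a} ≃ {x : Fin n // x ∈ A})
      × ({x : Fin n // x ∈ (Iv n b) \ (Iv n a)} ≃ {x : Fin n // x ∈ B \ A})
      × ({x : Fin n // ¬ x ∈ Iv n b} ≃ {x : Fin n // ¬ x ∈ B}))
      = a.factorial * (b-a).factorial * (n-b).factorial := by
    rw [Fintype.card_prod, Fintype.card_prod,
      Fintype.card_equiv (Fintype.equivOfCardEq (c1.trans c2.symm)),
      Fintype.card_equiv (Fintype.equivOfCardEq (c3.trans c4.symm)),
      Fintype.card_equiv (Fintype.equivOfCardEq (c5.trans c6.symm)), c1, c3, c5, mul_assoc]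
  have hinj : Function.Injective
      (fun σ : {σ : Equiv.Perm (Fin n) // σ ∈ Pass A ∩ Pass B} =>
        (resEquiv σ.1 (Iv n a) A (himg σ.1 σ.2).1,
         resEquiv σ.1 ((Iv n b) \ (Iv n a)) (B \ A) (himg σ.1 σ.2).2.1,
         resEquivCompl σ.1 (Iv n b) B (himg σ.1 σ.2).2.2)) := by
    rintro ⟨σ, hσ⟩ ⟨τ, hτ⟩ h
    simp only [Prod.mk.injEq] at h
    obtain ⟨h1, h2, h3⟩ := h
    refine Subtype.ext (Equiv.ext fun x => ?_)
    by_cases hxa : x ∈ Iv n a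
    · have := congrArg (fun e => ((e ⟨x, hxa⟩ : {x : Fin n // x ∈ A}) : Fin n)) h1
      simpa [resEquiv_apply] using this
    · by_cases hxb : x ∈ Iv n b
      · have hx : x ∈ (Iv n b) \ (Iv n a) := Finset.mem_sdiff.mpr ⟨hxb, hxa⟩
        have := congrArg (fun e => ((e ⟨x, hx⟩ : {x : Fin n // x ∈ B \ A}) : Fin n)) h2
        simpa [resEquiv_apply] using this
      · have := congrArg (fun e => ((e ⟨x, hxb⟩ : {x : Fin n // ¬ x ∈ B}) : Fin n)) h3
        simpa [resEquivCompl_apply] using this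
  calc (Pass A ∩ Pass B).card = Fintype.card {σ : Equiv.Perm (Fin n) // σ ∈ Pass A ∩ Pass B} :=
        (Fintype.card_coe _).symm
    _ ≤ _ := Fintype.card_le_of_injective _ hinj
    _ = a.factorial * (b-a).factorial * (n-b).factorial := cardT

private lemma wle {x y : WPoset} (h : x ≤ y) : x = none ∨ x = y := h


/-- Upper estimate: for `n ≥ 3`,
`Sp(W,n) ≤ ⌊ n/(3n−2−2⌊n/2⌋) · C(n−1, ⌊(n−1)/2⌋) ⌋`. -/
theorem stmt_17 (n : ℕ) (hn : 3 ≤ n) :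
    sSup {k : ℕ | Nonempty ((Σ _ : Fin k, WPoset) ↪o Set (Fin n))}
      ≤ n * (n - 1).choose ((n - 1) / 2) / (3 * n - 2 - 2 * (n / 2)) := by
  classical
  have hD : 0 < 3 * n - 2 - 2 * (n / 2) := by omega
  refine csSup_le ⟨0, ⟨OrderEmbedding.ofMapLEIff (fun x => Fin.elim0 x.1)
    (fun a b => Fin.elim0 a.1)⟩⟩ ?_
  rintro k ⟨f⟩
  rw [Nat.le_div_iff_mul_le hD]
  -- notation
  set Num := n * (n - 1).choose ((n - 1) / 2) with hNum
  set D := 3 * n - 2 - 2 * (n / 2) with hDdef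
  -- finset images
  let A : Fin k → Option (Fin 3) → Finset (Fin n) :=
    fun i w => (Set.toFinite (f ⟨i, w⟩ : Set (Fin n))).toFinset
  have hle : ∀ (i : Fin k) (w w' : Option (Fin 3)),
      (⟨i, w⟩ : Σ _ : Fin k, WPoset) ≤ ⟨i, w'⟩ → A i w ⊆ A i w' := by
    intro i w w' h
    exact Set.Finite.toFinset_subset_toFinset.mpr (f.le_iff_le.mpr h)
  have hcross : ∀ (i i' : Fin k), i ≠ i' → ∀ (w w' : Option (Fin 3)),
      ¬ (A i w ⊆ A i' w') := by
    intro i i' hii w w' hsub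
    have h1 : f ⟨i, w⟩ ≤ f ⟨i', w'⟩ := Set.Finite.toFinset_subset_toFinset.mp hsub
    have h2 := f.le_iff_le.mp h1
    rw [Sigma.le_def] at h2
    exact hii h2.1
  have hwin : ∀ (i : Fin k) (j j' : Fin 3), j ≠ j' →
      ¬ (A i (some j) ⊆ A i (some j')) := by
    intro i j j' hjj hsub
    have h1 : f ⟨i, some j⟩ ≤ f ⟨i, some j'⟩ := Set.Finite.toFinset_subset_toFinset.mp hsub
    have h2 := f.le_iff_le.mp h1
    have h3 := Sigma.mk_le_mk_iff.mp h2
    rcases wle h3 with h | h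
    · cases h
    · exact hjj (Option.some.inj h)
  have hZC : ∀ (i : Fin k) (j : Fin 3), (A i none).card < (A i (some j)).card := by
    intro i j
    refine Finset.card_lt_card (HasSubset.Subset.ssubset_of_ne ?_ ?_)
    · exact hle i none (some j) (Sigma.mk_le_mk_iff.mpr (Or.inl rfl))
    · intro he
      have h1 : (f ⟨i, none⟩ : Set (Fin n)) = f ⟨i, some j⟩ :=
        Set.Finite.toFinset_inj.mp he
      have h2 := f.injective h1
      cases h2
  have hZsub : ∀ (i : Fin k) (j : Fin 3), A i none ⊆ A i (some j) :=
    fun i j => hle i none (some j) (Sigma.mk_le_mk_iff.mpr (Or.inl rfl))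
  have hcard_le : ∀ (i : Fin k) (w : Option (Fin 3)), (A i w).card ≤ n := by
    intro i w
    simpa using Finset.card_le_card (Finset.subset_univ (A i w))
  -- events
  let E : Fin k → Finset (Equiv.Perm (Fin n)) :=
    fun i => Pass (A i none) ∪ (Pass (A i (some 0)) ∪ (Pass (A i (some 1)) ∪ Pass (A i (some 2))))
  have hpdisj : ∀ (X Y : Finset (Fin n)), ¬ (X ⊆ Y) → ¬ (Y ⊆ X) →
      Disjoint (Pass X) (Pass Y) := by
    intro X Y h1 h2
    rw [Finset.disjoint_left]
    intro σ hX hY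
    rcases le_total X.card Y.card with h | h
    · exact h1 (pass_subset hX hY h)
    · exact h2 (pass_subset hY hX h)
  have hmem_cases : ∀ (i : Fin k) (σ : Equiv.Perm (Fin n)), σ ∈ E i →
      ∃ w, σ ∈ Pass (A i w) := by
    intro i σ hσ
    simp only [E, Finset.mem_union] at hσ
    rcases hσ with h | h | h | h
    exacts [⟨none, h⟩, ⟨some 0, h⟩, ⟨some 1, h⟩, ⟨some 2, h⟩]
  have hdisj : ∀ i i' : Fin k, i ≠ i' → Disjoint (E i) (E i') := by
    intro i i' hii
    rw [Finset.disjoint_left]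
    intro σ hσ hσ'
    obtain ⟨w, hw⟩ := hmem_cases i σ hσ
    obtain ⟨w', hw'⟩ := hmem_cases i' σ hσ'
    rcases le_total (A i w).card (A i' w').card with h | h
    · exact hcross i i' hii w w' (pass_subset hw hw' h)
    · exact hcross i' i (Ne.symm hii) w' w (pass_subset hw' hw h)
  -- total count
  have hsum : ∑ i : Fin k, (E i).card ≤ n.factorial := by
    calc ∑ i : Fin k, (E i).card = (Finset.univ.biUnion E).card :=
          (Finset.card_biUnion (fun x _ y _ hxy => hdisj x y hxy)).symm
      _ ≤ (Finset.univ : Finset (Equiv.Perm (Fin n))).card :=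
          Finset.card_le_card (Finset.subset_univ _)
      _ = n.factorial := by rw [Finset.card_univ, Fintype.card_perm, Fintype.card_fin]
  -- per-copy bound
  have hper : ∀ i : Fin k, D * n.factorial ≤ (E i).card * Num := by
    intro i
    set az := (A i none).card with haz
    have hb : ∀ j : Fin 3, az < (A i (some j)).card := hZC i
    have hintj : ∀ j : Fin 3, (Pass (A i none) ∩ Pass (A i (some j))).card
        ≤ az.factorial * ((A i (some j)).card - az).factorial
            * (n - (A i (some j)).card).factorial :=
      fun j => card_pass_inter_le _ _ (hZsub i j)
    have hcz : az.factorial * (n - az).factorial ≤ (Pass (A i none)).card := card_pass_ge _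
    have hcj : ∀ j : Fin 3, ((A i (some j)).card).factorial
        * (n - (A i (some j)).card).factorial ≤ (Pass (A i (some j))).card :=
      fun j => card_pass_ge _
    -- disjointness of the three tops
    have d01 := hpdisj _ _ (hwin i 0 1 (by decide)) (hwin i 1 0 (by decide))
    have d02 := hpdisj _ _ (hwin i 0 2 (by decide)) (hwin i 2 0 (by decide))
    have d12 := hpdisj _ _ (hwin i 1 2 (by decide)) (hwin i 2 1 (by decide))
    have cardU : (Pass (A i (some 0)) ∪ (Pass (A i (some 1)) ∪ Pass (A i (some 2)))).card
        = (Pass (A i (some 0))).card + ((Pass (A i (some 1))).card + (Pass (A i (some 2))).card) := by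
      rw [Finset.card_union_of_disjoint (Finset.disjoint_union_right.mpr ⟨d01, d02⟩),
        Finset.card_union_of_disjoint d12]
    have hIE := Finset.card_union_add_card_inter (Pass (A i none))
      (Pass (A i (some 0)) ∪ (Pass (A i (some 1)) ∪ Pass (A i (some 2))))
    have hint : (Pass (A i none) ∩ (Pass (A i (some 0)) ∪ (Pass (A i (some 1)) ∪ Pass (A i (some 2))))).card
        ≤ (Pass (A i none) ∩ Pass (A i (some 0))).card
          + ((Pass (A i none) ∩ Pass (A i (some 1))).card
          + (Pass (A i none) ∩ Pass (A i (some 2))).card) := by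
      rw [Finset.inter_union_distrib_left, Finset.inter_union_distrib_left]
      exact le_trans (Finset.card_union_le _ _)
        (Nat.add_le_add_left (Finset.card_union_le _ _) _)
    have hkey : az.factorial * (n - az).factorial
        + (((A i (some 0)).card).factorial * (n - (A i (some 0)).card).factorial
          + (((A i (some 1)).card).factorial * (n - (A i (some 1)).card).factorial
          + ((A i (some 2)).card).factorial * (n - (A i (some 2)).card).factorial))
        ≤ (E i).card
          + (az.factorial * ((A i (some 0)).card - az).factorial * (n - (A i (some 0)).card).factorial
          + (az.factorial * ((A i (some 1)).card - az).factorial * (n - (A i (some 1)).card).factorial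
          + az.factorial * ((A i (some 2)).card - az).factorial * (n - (A i (some 2)).card).factorial)) := by
      have hEi : (E i).card = (Pass (A i none)
          ∪ (Pass (A i (some 0)) ∪ (Pass (A i (some 1)) ∪ Pass (A i (some 2))))).card := rfl
      rw [hEi]
      linarith [hIE, hint, hcz, hcj 0, hcj 1, hcj 2, hintj 0, hintj 1, hintj 2, cardU]
    have hc0 := core n az ((A i (some 0)).card) hn (hb 0) (hcard_le i (some 0))
    have hc1 := core n az ((A i (some 1)).card) hn (hb 1) (hcard_le i (some 1))
    have hc2 := core n az ((A i (some 2)).card) hn (hb 2) (hcard_le i (some 2))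
    have hkeyM := Nat.mul_le_mul_right (3 * Num) hkey
    rw [hNum] at *
    rw [hDdef]
    ring_nf at hkeyM hc0 hc1 hc2 ⊢
    linarith [hkeyM, hc0, hc1, hc2]
  -- combine
  have h1 : k * (D * n.factorial) ≤ Num * n.factorial := by
    calc k * (D * n.factorial) = ∑ _i : Fin k, D * n.factorial := by
          rw [Finset.sum_const, Finset.card_univ, Fintype.card_fin, smul_eq_mul]
      _ ≤ ∑ i : Fin k, (E i).card * Num := Finset.sum_le_sum (fun i _ => hper i)
      _ = (∑ i : Fin k, (E i).card) * Num := (Finset.sum_mul _ _ _).symm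
      _ ≤ n.factorial * Num := Nat.mul_le_mul_right _ hsum
      _ = Num * n.factorial := mul_comm _ _
  have h2 : k * D * n.factorial ≤ Num * n.factorial := by
    rw [mul_assoc]; exact h1
  exact Nat.le_of_mul_le_mul_right h2 (Nat.factorial_pos n)
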